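/- arXiv:2004.07298 — 2 statements merged into one kernel-verified Lean document; each statement's English description precedes it below -/
import Mathlib

section
/- Let (L_N)_{N≥1} be a sequence of positive reals and α > 0. Assume τ satisfies the anticoncentration inequality: there is C_a > 0 such that μ(τ_N ∈ 𝒞) ≤ C_a L_N^{−d} for every N ≥ 1 and every unit cube 𝒞 ⊂ ℝ^d. Let A₁, A₂ : X → ℝ be bounded measurable with |μ(A₁ · (A₂ ∘ f^N)) − μ(A₁)μ(A₂)| ≤ C_f L_N^{−α} for all N ≥ 1. Let B̃₁, B̃₂ : Y → ℝ be bounded measurable, set B_i = B̃_i − ν(B̃_i), and assume |ν(B₁ · (B₂ ∘ G_t))| ≤ ψ(t) for all t ∈ ℝ^d, where ψ : ℝ^d → (0, ∞) is integrable and there are a partition of ℝ^d into unit cubes {𝒞_i} and K > 0 with sup_{𝒞_i} ψ ≤ K inf_{𝒞_i} ψ for each i. Then, with Φ_i(x, y) = A_i(x)B̃_i(y), there is C' such that |∫ Φ₁ · (Φ₂ ∘ F^N) dζ − (∫ Φ₁ dζ)(∫ Φ₂ dζ)| ≤ C' L_N^{−min(d, α)} for all N ≥ 1. -/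
open MeasureTheory Filter Topology

noncomputable section

/-- The (closed, axis-parallel) cube in `ℝ^d` with corner `a` and side length `c`. -/
def cube {d : ℕ} (a : EuclideanSpace ℝ (Fin d)) (c : ℝ) : Set (EuclideanSpace ℝ (Fin d)) :=
  {t | ∀ i, a i ≤ t i ∧ t i ≤ a i + c}

/-- The half-open axis-parallel unit cube in `ℝ^d` with corner `a` (used for partitions). -/
def cubeHO {d : ℕ} (a : EuclideanSpace ℝ (Fin d)) : Set (EuclideanSpace ℝ (Fin d)) :=
  {t | ∀ i, a i ≤ t i ∧ t i < a i + 1}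

/-- Birkhoff sums `τ_N(x) = ∑_{n<N} τ(f^n x)` of an `ℝ^d`-valued observable. -/
def birkhoff {X : Type*} {d : ℕ} (f : X → X)
    (τ : X → EuclideanSpace ℝ (Fin d)) (N : ℕ) (x : X) : EuclideanSpace ℝ (Fin d) :=
  ∑ n ∈ Finset.range N, τ (f^[n] x)

/-- The generalized `T,T⁻¹` (skew product) map `F(x,y) = (f x, G_{τ(x)} y)`. -/
def skew {X Y : Type*} {d : ℕ} (f : X → X) (G : EuclideanSpace ℝ (Fin d) → Y → Y)
    (τ : X → EuclideanSpace ℝ (Fin d)) : X × Y → X × Y :=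
  fun q => (f q.1, G (τ q.1) q.2)


/-- Auxiliary: bounded a.e.-strongly-measurable functions are integrable on finite measures. -/
theorem aux_int_of_bdd {Z : Type*} [MeasurableSpace Z] {κ : Measure Z} [IsFiniteMeasure κ]
    {h : Z → ℝ} (hm : AEStronglyMeasurable h κ) {M : ℝ} (hb : ∀ z, |h z| ≤ M) :
    Integrable h κ :=
  (integrable_const M).mono' hm (Filter.Eventually.of_forall fun z => by
    simpa [Real.norm_eq_abs] using hb z)

/-- Auxiliary: iterates of the skew product. -/
theorem aux_skew_iter {X Y : Type*} {d : ℕ} (f : X → X) (G : EuclideanSpace ℝ (Fin d) → Y → Y)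
    (τ : X → EuclideanSpace ℝ (Fin d)) (hG0 : G 0 = id) (hGadd : ∀ t s, G (t + s) = G t ∘ G s)
    (N : ℕ) (q : X × Y) :
    (skew f G τ)^[N] q = (f^[N] q.1, G (birkhoff f τ N q.1) q.2) := by
  induction N with
  | zero => simp [birkhoff, hG0]
  | succ N ih =>
    rw [Function.iterate_succ_apply', ih]
    have : birkhoff f τ (N + 1) q.1 = τ (f^[N] q.1) + birkhoff f τ N q.1 := by
      simp [birkhoff, Finset.sum_range_succ, add_comm]
    rw [this, hGadd, skew, Function.iterate_succ_apply']
    rfl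

theorem aux_cubeHO_meas {d : ℕ} (a : EuclideanSpace ℝ (Fin d)) : MeasurableSet (cubeHO a) := by
  have : cubeHO a = ⋂ i, {t : EuclideanSpace ℝ (Fin d) | t i ∈ Set.Ico (a i) (a i + 1)} := by
    ext t; simp [cubeHO, Set.mem_Ico, Set.mem_iInter]
  rw [this]
  exact MeasurableSet.iInter fun i =>
    measurableSet_Ico.preimage (f := fun t : EuclideanSpace ℝ (Fin d) => t i) (by fun_prop)

theorem aux_cubeHO_vol {d : ℕ} (a : EuclideanSpace ℝ (Fin d)) : volume (cubeHO a) = 1 := by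
  have hset : cubeHO a = (MeasurableEquiv.toLp 2 (Fin d → ℝ)).symm ⁻¹'
          (Set.univ.pi fun i => Set.Ico (a i) (a i + 1)) := by
    ext t
    simp only [cubeHO, Set.mem_preimage, Set.mem_pi, Set.mem_univ, true_implies, Set.mem_Ico,
      Set.mem_setOf_eq]
    rfl
  rw [hset, MeasurePreserving.measure_preimage
    (EuclideanSpace.volume_preserving_symm_measurableEquiv_toLp (Fin d))
    (MeasurableSet.univ_pi fun i => measurableSet_Ico).nullMeasurableSet]
  rw [volume_pi_pi]
  simp [Real.volume_Ico]

theorem aux_psi_cube_bd {d : ℕ} {ψ : EuclideanSpace ℝ (Fin d) → ℝ} (hψpos : ∀ t, 0 < ψ t)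
    (hψint : Integrable ψ) {K : ℝ} (hK : 0 < K) (a : EuclideanSpace ℝ (Fin d))
    (hosc : ∀ t ∈ cubeHO a, ∀ t' ∈ cubeHO a, ψ t ≤ K * ψ t')
    {t : EuclideanSpace ℝ (Fin d)} (ht : t ∈ cubeHO a) :
    ψ t ≤ K * ∫ t' in cubeHO a, ψ t' := by
  have h1 : ∫ _t' in cubeHO a, (ψ t / K) ≤ ∫ t' in cubeHO a, ψ t' := by
    apply setIntegral_mono_on
    · exact integrableOn_const (by rw [aux_cubeHO_vol]; exact ENNReal.one_ne_top)
    · exact hψint.integrableOn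
    · exact aux_cubeHO_meas a
    · intro t' ht'
      rw [div_le_iff₀ hK]
      calc ψ t ≤ K * ψ t' := hosc t ht t' ht'
      _ = ψ t' * K := mul_comm _ _
  rw [setIntegral_const, measureReal_def, aux_cubeHO_vol] at h1
  simp at h1
  rw [div_le_iff₀ hK] at h1
  linarith [h1]

theorem aux_psi_lintegral_bd {X : Type*} [MeasurableSpace X] (μ : Measure X)
    [IsProbabilityMeasure μ]
    {d : ℕ} (T : X → EuclideanSpace ℝ (Fin d)) (hT : Measurable T)
    {ψ : EuclideanSpace ℝ (Fin d) → ℝ} (hψpos : ∀ t, 0 < ψ t) (hψint : Integrable ψ)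
    (a : ℕ → EuclideanSpace ℝ (Fin d)) {K : ℝ} (hK : 0 < K)
    (hcover : (⋃ i, cubeHO (a i)) = Set.univ)
    (hdisj : Pairwise fun i j => Disjoint (cubeHO (a i)) (cubeHO (a j)))
    (hosc : ∀ i, ∀ t ∈ cubeHO (a i), ∀ t' ∈ cubeHO (a i), ψ t ≤ K * ψ t')
    {c : ℝ} (hc : 0 ≤ c) (hbd : ∀ i, μ (T ⁻¹' cubeHO (a i)) ≤ ENNReal.ofReal c) :
    ∫⁻ x, ENNReal.ofReal (ψ (T x)) ∂μ ≤ ENNReal.ofReal (K * c * ∫ t, ψ t) := by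
  have hmeasE : ∀ i, MeasurableSet (T ⁻¹' cubeHO (a i)) := fun i => hT (aux_cubeHO_meas (a i))
  have hcovE : (⋃ i, T ⁻¹' cubeHO (a i)) = Set.univ := by
    rw [← Set.preimage_iUnion, hcover, Set.preimage_univ]
  have hdisjE : Pairwise (Function.onFun Disjoint fun i => T ⁻¹' cubeHO (a i)) :=
    fun i j hij => Set.disjoint_iff_inter_eq_empty.2 (by
      rw [← Set.preimage_inter, Set.disjoint_iff_inter_eq_empty.1 (hdisj hij),
        Set.preimage_empty])
  calc ∫⁻ x, ENNReal.ofReal (ψ (T x)) ∂μ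
      = ∫⁻ x in ⋃ i, T ⁻¹' cubeHO (a i), ENNReal.ofReal (ψ (T x)) ∂μ := by
        rw [hcovE, Measure.restrict_univ]
    _ = ∑' i, ∫⁻ x in T ⁻¹' cubeHO (a i), ENNReal.ofReal (ψ (T x)) ∂μ :=
        lintegral_iUnion hmeasE hdisjE _
    _ ≤ ∑' i, ENNReal.ofReal (K * c) * ENNReal.ofReal (∫ t in cubeHO (a i), ψ t) := by
        apply ENNReal.tsum_le_tsum
        intro i
        calc ∫⁻ x in T ⁻¹' cubeHO (a i), ENNReal.ofReal (ψ (T x)) ∂μ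
            ≤ ∫⁻ _x in T ⁻¹' cubeHO (a i),
                ENNReal.ofReal (K * ∫ t in cubeHO (a i), ψ t) ∂μ := by
              apply setLIntegral_mono measurable_const
              intro x hx
              exact ENNReal.ofReal_le_ofReal
                (aux_psi_cube_bd hψpos hψint hK (a i) (hosc i) hx)
          _ = ENNReal.ofReal (K * ∫ t in cubeHO (a i), ψ t) * μ (T ⁻¹' cubeHO (a i)) :=
              setLIntegral_const _ _
          _ ≤ ENNReal.ofReal (K * ∫ t in cubeHO (a i), ψ t) * ENNReal.ofReal c :=
              mul_le_mul_right (hbd i) _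
          _ = ENNReal.ofReal (K * c) * ENNReal.ofReal (∫ t in cubeHO (a i), ψ t) := by
              have hint : 0 ≤ ∫ t in cubeHO (a i), ψ t :=
                setIntegral_nonneg (aux_cubeHO_meas _) fun t _ => (hψpos t).le
              rw [← ENNReal.ofReal_mul (mul_nonneg hK.le hint),
                ← ENNReal.ofReal_mul (mul_nonneg hK.le hc)]
              ring_nf
    _ = ENNReal.ofReal (K * c) * ∑' i, ENNReal.ofReal (∫ t in cubeHO (a i), ψ t) :=
        ENNReal.tsum_mul_left
    _ ≤ ENNReal.ofReal (K * c) * ENNReal.ofReal (∫ t, ψ t) := by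
        apply mul_le_mul_right
        have heq : ∀ i, ENNReal.ofReal (∫ t in cubeHO (a i), ψ t)
            = ∫⁻ t in cubeHO (a i), ENNReal.ofReal (ψ t) := fun i =>
          ofReal_integral_eq_lintegral_ofReal hψint.integrableOn
            (Filter.Eventually.of_forall fun t => (hψpos t).le)
        simp_rw [heq]
        rw [← lintegral_iUnion (fun i => aux_cubeHO_meas (a i)) hdisj, hcover,
          Measure.restrict_univ,
          ofReal_integral_eq_lintegral_ofReal hψint
            (Filter.Eventually.of_forall fun t => (hψpos t).le)]
    _ = ENNReal.ofReal (K * c * ∫ t, ψ t) := by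
        rw [← ENNReal.ofReal_mul (by positivity)]

/-- Theorem 4.6 of the paper: if `f` mixes with rate `L_N^{-α}`, `τ` satisfies the
anticoncentration inequality, and the correlations of the (centered) fiber observables are
dominated by an integrable function `ψ` which oscillates boundedly on unit cubes, then the
correlations of the product observables decay like `L_N^{-min(d,α)}`. -/
theorem stmt_4
    {X Y : Type*} [MeasurableSpace X] [MeasurableSpace Y]
    (μ : Measure X) (ν : Measure Y)
    [IsProbabilityMeasure μ] [IsProbabilityMeasure ν]
    {d : ℕ}
    (f : X → X) (hf : MeasurePreserving f μ μ)
    (G : EuclideanSpace ℝ (Fin d) → Y → Y)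
    (hGmeas : Measurable fun q : EuclideanSpace ℝ (Fin d) × Y => G q.1 q.2)
    (hG0 : G 0 = id)
    (hGadd : ∀ t s, G (t + s) = G t ∘ G s)
    (hGpres : ∀ t, MeasurePreserving (G t) ν ν)
    (τ : X → EuclideanSpace ℝ (Fin d)) (hτmeas : Measurable τ)
    (hτbdd : ∃ M, ∀ x, ‖τ x‖ ≤ M)
    (L : ℕ → ℝ) (hL : ∀ N, 0 < L N) (α : ℝ) (hα : 0 < α)
    (Ca : ℝ) (hCa : 0 < Ca)
    -- anticoncentration inequality for τ
    (hanti : ∀ N : ℕ, 1 ≤ N → ∀ a : EuclideanSpace ℝ (Fin d),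
      (μ {x | birkhoff f τ N x ∈ cube a 1}).toReal ≤ Ca * (L N) ^ (-(d : ℝ)))
    (A₁ A₂ : X → ℝ)
    (hA₁ : Measurable A₁) (hA₂ : Measurable A₂)
    (hA₁b : ∃ M, ∀ x, |A₁ x| ≤ M) (hA₂b : ∃ M, ∀ x, |A₂ x| ≤ M)
    (Cf : ℝ)
    -- mixing of f with rate L_N^{-α}
    (hfmix : ∀ N : ℕ, 1 ≤ N →
      |(∫ x, A₁ x * A₂ (f^[N] x) ∂μ) - (∫ x, A₁ x ∂μ) * ∫ x, A₂ x ∂μ|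
        ≤ Cf * (L N) ^ (-α))
    (B₁' B₂' : Y → ℝ) (hB₁' : Measurable B₁') (hB₂' : Measurable B₂')
    (hB₁b : ∃ M, ∀ y, |B₁' y| ≤ M) (hB₂b : ∃ M, ∀ y, |B₂' y| ≤ M)
    (ψ : EuclideanSpace ℝ (Fin d) → ℝ) (hψpos : ∀ t, 0 < ψ t)
    (hψint : Integrable ψ)
    -- ψ oscillates boundedly on the cubes of a partition of ℝ^d into unit cubes
    (hψosc : ∃ (a : ℕ → EuclideanSpace ℝ (Fin d)) (K : ℝ), 0 < K ∧
      (⋃ i, cubeHO (a i)) = Set.univ ∧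
      (Pairwise fun i j => Disjoint (cubeHO (a i)) (cubeHO (a j))) ∧
      ∀ i, ∀ t ∈ cubeHO (a i), ∀ t' ∈ cubeHO (a i), ψ t ≤ K * ψ t')
    -- fiber correlation bound for the centered observables
    (hGcorr : ∀ t : EuclideanSpace ℝ (Fin d),
      |∫ y, (B₁' y - ∫ y, B₁' y ∂ν) * ((B₂' (G t y)) - ∫ y, B₂' y ∂ν) ∂ν| ≤ ψ t) :
    ∃ C' : ℝ, ∀ N : ℕ, 1 ≤ N →
      |(∫ q, (A₁ q.1 * B₁' q.2) * (A₂ ((skew f G τ)^[N] q).1 * B₂' ((skew f G τ)^[N] q).2)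
          ∂(μ.prod ν))
        - (∫ q, A₁ q.1 * B₁' q.2 ∂(μ.prod ν)) * ∫ q, A₂ q.1 * B₂' q.2 ∂(μ.prod ν)|
        ≤ C' * (L N) ^ (-(min (d : ℝ) α)) := by
  classical
  obtain ⟨M₁, hM₁⟩ := hA₁b
  obtain ⟨M₂, hM₂⟩ := hA₂b
  obtain ⟨M₃, hM₃⟩ := hB₁b
  obtain ⟨M₄, hM₄⟩ := hB₂b
  obtain ⟨a, K, hK, hcover, hdisj, hosc⟩ := hψosc
  set M₁' := max M₁ 0 with hM₁'def
  set M₂' := max M₂ 0 with hM₂'def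
  set M₃' := max M₃ 0 with hM₃'def
  set M₄' := max M₄ 0 with hM₄'def
  have hM₁b : ∀ x, |A₁ x| ≤ M₁' := fun x => (hM₁ x).trans (le_max_left _ _)
  have hM₂b : ∀ x, |A₂ x| ≤ M₂' := fun x => (hM₂ x).trans (le_max_left _ _)
  have hM₃b : ∀ y, |B₁' y| ≤ M₃' := fun y => (hM₃ y).trans (le_max_left _ _)
  have hM₄b : ∀ y, |B₂' y| ≤ M₄' := fun y => (hM₄ y).trans (le_max_left _ _)
  have hM₁0 : (0:ℝ) ≤ M₁' := le_max_right _ _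
  have hM₂0 : (0:ℝ) ≤ M₂' := le_max_right _ _
  have hM₃0 : (0:ℝ) ≤ M₃' := le_max_right _ _
  have hM₄0 : (0:ℝ) ≤ M₄' := le_max_right _ _
  set m₁ := ∫ y, B₁' y ∂ν with hm₁def
  set m₂ := ∫ y, B₂' y ∂ν with hm₂def
  have hm₁b : |m₁| ≤ M₃' := by
    rw [← Real.norm_eq_abs]
    calc ‖m₁‖ ≤ M₃' * (ν Set.univ).toReal := norm_integral_le_of_norm_le_const
          (Filter.Eventually.of_forall fun y => by
            rw [Real.norm_eq_abs]; exact hM₃b y)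
      _ = M₃' := by simp
  have hm₂b : |m₂| ≤ M₄' := by
    rw [← Real.norm_eq_abs]
    calc ‖m₂‖ ≤ M₄' * (ν Set.univ).toReal := norm_integral_le_of_norm_le_const
          (Filter.Eventually.of_forall fun y => by
            rw [Real.norm_eq_abs]; exact hM₄b y)
      _ = M₄' := by simp
  set ρ : EuclideanSpace ℝ (Fin d) → ℝ :=
    fun t => ∫ y, (B₁' y - m₁) * (B₂' (G t y) - m₂) ∂ν with hρdef
  have hρmeas : Measurable ρ := by
    have hsm : StronglyMeasurable fun p : EuclideanSpace ℝ (Fin d) × Y =>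
        (B₁' p.2 - m₁) * (B₂' (G p.1 p.2) - m₂) :=
      (((hB₁'.comp measurable_snd).sub measurable_const).mul
        ((hB₂'.comp hGmeas).sub measurable_const)).stronglyMeasurable
    exact hsm.integral_prod_right'.measurable
  have hρψ : ∀ t, |ρ t| ≤ ψ t := fun t => hGcorr t
  have hρbd : ∀ t, |ρ t| ≤ 2 * M₃' * (2 * M₄') := by
    intro t
    rw [← Real.norm_eq_abs]
    calc ‖ρ t‖ ≤ (2 * M₃' * (2 * M₄')) * (ν Set.univ).toReal := by
          apply norm_integral_le_of_norm_le_const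
          apply Filter.Eventually.of_forall
          intro y
          rw [Real.norm_eq_abs, abs_mul]
          have h1 : |B₁' y - m₁| ≤ 2 * M₃' := by
            have := abs_le.1 (hM₃b y); have := abs_le.1 hm₁b
            rw [abs_le]; constructor <;> linarith
          have h2 : |B₂' (G t y) - m₂| ≤ 2 * M₄' := by
            have := abs_le.1 (hM₄b (G t y)); have := abs_le.1 hm₂b
            rw [abs_le]; constructor <;> linarith
          exact mul_le_mul h1 h2 (abs_nonneg _) (by positivity)
      _ = 2 * M₃' * (2 * M₄') := by simp
  have hGt_int : ∀ t, ∫ y, B₂' (G t y) ∂ν = m₂ := by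
    intro t
    rw [hm₂def, ← integral_map (hGpres t).measurable.aemeasurable
      (by rw [(hGpres t).map_eq]; exact hB₂'.aestronglyMeasurable), (hGpres t).map_eq]
  have hB₁int : Integrable B₁' ν := aux_int_of_bdd hB₁'.aestronglyMeasurable hM₃b
  have hρeq : ∀ t, ∫ y, B₁' y * B₂' (G t y) ∂ν = m₁ * m₂ + ρ t := by
    intro t
    have hGtmeas : Measurable fun y => B₂' (G t y) := hB₂'.comp (hGpres t).measurable
    have h2 : Integrable (fun y => B₂' (G t y)) ν :=
      aux_int_of_bdd hGtmeas.aestronglyMeasurable (fun y => hM₄b (G t y))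
    have h1 : Integrable (fun y => B₁' y * B₂' (G t y)) ν :=
      aux_int_of_bdd (hB₁'.mul hGtmeas).aestronglyMeasurable (M := M₃' * M₄') (fun y => by
        rw [abs_mul]; exact mul_le_mul (hM₃b y) (hM₄b (G t y)) (abs_nonneg _) hM₃0)
    have hP : Integrable (fun y => B₁' y * B₂' (G t y) - m₁ * B₂' (G t y)) ν :=
      h1.sub (h2.const_mul m₁)
    have hQ : Integrable (fun y => m₂ * B₁' y - m₁ * m₂) ν :=
      (hB₁int.const_mul m₂).sub (integrable_const _)
    have t1 : ∫ y, (B₁' y * B₂' (G t y) - m₁ * B₂' (G t y)) ∂ν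
        = (∫ y, B₁' y * B₂' (G t y) ∂ν) - m₁ * m₂ := by
      rw [integral_sub h1 (h2.const_mul m₁), integral_const_mul, hGt_int t]
    have t2 : ∫ y, (m₂ * B₁' y - m₁ * m₂) ∂ν = m₂ * m₁ - m₁ * m₂ := by
      rw [integral_sub (hB₁int.const_mul m₂) (integrable_const _), integral_const_mul,
        integral_const, ← hm₁def]
      simp [measure_univ]
    have hexp : ρ t = (∫ y, B₁' y * B₂' (G t y) ∂ν) - m₁ * m₂ := by
      have hfun : ρ t = ∫ y, ((B₁' y * B₂' (G t y) - m₁ * B₂' (G t y))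
          - (m₂ * B₁' y - m₁ * m₂)) ∂ν := by
        simp only [hρdef]
        apply integral_congr_ae
        apply Filter.Eventually.of_forall
        intro y
        ring
      rw [hfun, integral_sub hP hQ, t1, t2]
      ring
    linarith [hexp]
  set Iψ := ∫ t, ψ t with hIψdef
  have hIψ0 : 0 ≤ Iψ := integral_nonneg fun t => (hψpos t).le
  have hCf0 : 0 ≤ Cf := by
    have h := (abs_nonneg _).trans (hfmix 1 le_rfl)
    have hx : (0:ℝ) < (L 1) ^ (-α) := Real.rpow_pos_of_pos (hL 1) _
    nlinarith [h, hx]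
  set C1 : ℝ := M₃' * M₄' * Cf + M₁' * M₂' * (K * Ca * Iψ) with hC1def
  set C2 : ℝ := M₃' * M₄' * (2 * (M₁' * M₂')) + M₁' * M₂' * (2 * M₃' * (2 * M₄')) with hC2def
  have hC20 : 0 ≤ C2 := by positivity
  refine ⟨max C1 C2, ?_⟩
  have hC'0 : 0 ≤ max C1 C2 := hC20.trans (le_max_right _ _)
  intro N hN
  have hfNmeas : Measurable (f^[N]) := hf.measurable.iterate N
  have hbmeas : Measurable (birkhoff f τ N) := by
    unfold birkhoff
    exact Finset.measurable_sum _ fun n _ => hτmeas.comp (hf.measurable.iterate n)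
  have hFN : ∀ q : X × Y, (skew f G τ)^[N] q = (f^[N] q.1, G (birkhoff f τ N q.1) q.2) :=
    aux_skew_iter f G τ hG0 hGadd N
  have hint_eq : (∫ q, (A₁ q.1 * B₁' q.2)
        * (A₂ ((skew f G τ)^[N] q).1 * B₂' ((skew f G τ)^[N] q).2) ∂(μ.prod ν))
      = ∫ q : X × Y, (A₁ q.1 * B₁' q.2)
          * (A₂ (f^[N] q.1) * B₂' (G (birkhoff f τ N q.1) q.2)) ∂(μ.prod ν) := by
    apply integral_congr_ae
    apply Filter.Eventually.of_forall
    intro q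
    simp only [hFN q]
  have hCmeas : Measurable fun x => A₁ x * A₂ (f^[N] x) := hA₁.mul (hA₂.comp hfNmeas)
  have hCbdd : ∀ x, |A₁ x * A₂ (f^[N] x)| ≤ M₁' * M₂' := fun x => by
    rw [abs_mul]; exact mul_le_mul (hM₁b x) (hM₂b _) (abs_nonneg _) hM₁0
  have hCint : Integrable (fun x => A₁ x * A₂ (f^[N] x)) μ :=
    aux_int_of_bdd hCmeas.aestronglyMeasurable hCbdd
  have hSmeas : Measurable fun x => (A₁ x * A₂ (f^[N] x)) * ρ (birkhoff f τ N x) :=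
    hCmeas.mul (hρmeas.comp hbmeas)
  have hSbdd : ∀ x, |(A₁ x * A₂ (f^[N] x)) * ρ (birkhoff f τ N x)|
      ≤ (M₁' * M₂') * (2 * M₃' * (2 * M₄')) := fun x => by
    rw [abs_mul]
    exact mul_le_mul (hCbdd x) (hρbd _) (abs_nonneg _) (by positivity)
  have hSint : Integrable (fun x => (A₁ x * A₂ (f^[N] x)) * ρ (birkhoff f τ N x)) μ :=
    aux_int_of_bdd hSmeas.aestronglyMeasurable hSbdd
  have hHmeas : Measurable fun q : X × Y =>
      (A₁ q.1 * B₁' q.2) * (A₂ (f^[N] q.1) * B₂' (G (birkhoff f τ N q.1) q.2)) := by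
    apply Measurable.mul
    · exact (hA₁.comp measurable_fst).mul (hB₁'.comp measurable_snd)
    · exact (hA₂.comp (hfNmeas.comp measurable_fst)).mul
        (hB₂'.comp (hGmeas.comp ((hbmeas.comp measurable_fst).prodMk measurable_snd)))
  have hHbdd : ∀ q : X × Y, |(A₁ q.1 * B₁' q.2)
      * (A₂ (f^[N] q.1) * B₂' (G (birkhoff f τ N q.1) q.2))|
      ≤ (M₁' * M₃') * (M₂' * M₄') := fun q => by
    rw [abs_mul, abs_mul, abs_mul]
    exact mul_le_mul (mul_le_mul (hM₁b _) (hM₃b _) (abs_nonneg _) hM₁0)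
      (mul_le_mul (hM₂b _) (hM₄b _) (abs_nonneg _) hM₂0)
      (mul_nonneg (abs_nonneg _) (abs_nonneg _)) (mul_nonneg hM₁0 hM₃0)
  have hHint : Integrable (fun q : X × Y =>
      (A₁ q.1 * B₁' q.2) * (A₂ (f^[N] q.1) * B₂' (G (birkhoff f τ N q.1) q.2))) (μ.prod ν) :=
    aux_int_of_bdd hHmeas.aestronglyMeasurable hHbdd
  have hsplit : (∫ q : X × Y, (A₁ q.1 * B₁' q.2)
        * (A₂ (f^[N] q.1) * B₂' (G (birkhoff f τ N q.1) q.2)) ∂(μ.prod ν))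
      = (m₁ * m₂) * (∫ x, A₁ x * A₂ (f^[N] x) ∂μ)
        + ∫ x, (A₁ x * A₂ (f^[N] x)) * ρ (birkhoff f τ N x) ∂μ := by
    rw [integral_prod _ hHint]
    have hinner : ∀ x, (∫ y, (A₁ x * B₁' y)
          * (A₂ (f^[N] x) * B₂' (G (birkhoff f τ N x) y)) ∂ν)
        = (m₁ * m₂) * (A₁ x * A₂ (f^[N] x))
          + (A₁ x * A₂ (f^[N] x)) * ρ (birkhoff f τ N x) := by
      intro x
      have h1 : (fun y => (A₁ x * B₁' y) * (A₂ (f^[N] x) * B₂' (G (birkhoff f τ N x) y)))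
          = fun y => (A₁ x * A₂ (f^[N] x)) * (B₁' y * B₂' (G (birkhoff f τ N x) y)) := by
        funext y; ring
      rw [h1, integral_const_mul, hρeq (birkhoff f τ N x)]
      ring
    simp only [hinner]
    rw [integral_add (hCint.const_mul (m₁ * m₂)) hSint, integral_const_mul]
  have hΦ₁ : (∫ q : X × Y, A₁ q.1 * B₁' q.2 ∂(μ.prod ν)) = (∫ x, A₁ x ∂μ) * m₁ :=
    integral_prod_mul A₁ B₁'
  have hΦ₂ : (∫ q : X × Y, A₂ q.1 * B₂' q.2 ∂(μ.prod ν)) = (∫ x, A₂ x ∂μ) * m₂ :=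
    integral_prod_mul A₂ B₂'
  rw [hint_eq, hsplit, hΦ₁, hΦ₂]
  have hmix := hfmix N hN
  set CN := ∫ x, A₁ x * A₂ (f^[N] x) ∂μ with hCNdef
  set SN := ∫ x, (A₁ x * A₂ (f^[N] x)) * ρ (birkhoff f τ N x) ∂μ with hSNdef
  set IA₁ := ∫ x, A₁ x ∂μ with hIA₁def
  set IA₂ := ∫ x, A₂ x ∂μ with hIA₂def
  have halg : m₁ * m₂ * CN + SN - (IA₁ * m₁) * (IA₂ * m₂)
      = m₁ * m₂ * (CN - IA₁ * IA₂) + SN := by ring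
  rw [halg]
  have habs : |m₁ * m₂ * (CN - IA₁ * IA₂) + SN|
      ≤ |m₁| * |m₂| * |CN - IA₁ * IA₂| + |SN| := by
    calc |m₁ * m₂ * (CN - IA₁ * IA₂) + SN|
        ≤ |m₁ * m₂ * (CN - IA₁ * IA₂)| + |SN| := abs_add_le _ _
      _ = |m₁| * |m₂| * |CN - IA₁ * IA₂| + |SN| := by rw [abs_mul, abs_mul]
  -- the anticoncentration bound on |SN|
  have hSbd1 : |SN| ≤ (M₁' * M₂') * (K * (Ca * (L N) ^ (-(d:ℝ))) * Iψ) := by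
    have hc0 : 0 ≤ Ca * (L N) ^ (-(d:ℝ)) :=
      mul_nonneg hCa.le (Real.rpow_nonneg (hL N).le _)
    have hbd : ∀ i, μ ((birkhoff f τ N) ⁻¹' cubeHO (a i))
        ≤ ENNReal.ofReal (Ca * (L N) ^ (-(d:ℝ))) := by
      intro i
      rw [ENNReal.le_ofReal_iff_toReal_le (measure_ne_top μ _) hc0]
      refine le_trans ?_ (hanti N hN (a i))
      apply ENNReal.toReal_mono (measure_ne_top μ _)
      apply measure_mono
      intro x hx j
      exact ⟨(hx j).1, (hx j).2.le⟩
    have hRHS0 : 0 ≤ (M₁' * M₂') * (K * (Ca * (L N) ^ (-(d:ℝ))) * Iψ) :=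
      mul_nonneg (mul_nonneg hM₁0 hM₂0)
        (mul_nonneg (mul_nonneg hK.le hc0) hIψ0)
    calc |SN| = ‖∫ x, (A₁ x * A₂ (f^[N] x)) * ρ (birkhoff f τ N x) ∂μ‖ :=
          (Real.norm_eq_abs _).symm
      _ ≤ (∫⁻ x, ENNReal.ofReal
            ‖(A₁ x * A₂ (f^[N] x)) * ρ (birkhoff f τ N x)‖ ∂μ).toReal :=
          norm_integral_le_lintegral_norm _
      _ ≤ (M₁' * M₂') * (K * (Ca * (L N) ^ (-(d:ℝ))) * Iψ) := by
          apply ENNReal.toReal_le_of_le_ofReal hRHS0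
          calc ∫⁻ x, ENNReal.ofReal
                ‖(A₁ x * A₂ (f^[N] x)) * ρ (birkhoff f τ N x)‖ ∂μ
              ≤ ∫⁻ x, ENNReal.ofReal ((M₁' * M₂') * ψ (birkhoff f τ N x)) ∂μ := by
                apply lintegral_mono
                intro x
                apply ENNReal.ofReal_le_ofReal
                rw [Real.norm_eq_abs, abs_mul]
                exact mul_le_mul (hCbdd x) (hρψ _) (abs_nonneg _) (mul_nonneg hM₁0 hM₂0)
            _ = ENNReal.ofReal (M₁' * M₂')
                * ∫⁻ x, ENNReal.ofReal (ψ (birkhoff f τ N x)) ∂μ := by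
                simp_rw [ENNReal.ofReal_mul (mul_nonneg hM₁0 hM₂0)]
                exact lintegral_const_mul' _ _ ENNReal.ofReal_ne_top
            _ ≤ ENNReal.ofReal (M₁' * M₂')
                * ENNReal.ofReal (K * (Ca * (L N) ^ (-(d:ℝ))) * Iψ) :=
                mul_le_mul_right (aux_psi_lintegral_bd μ _ hbmeas hψpos hψint a hK
                  hcover hdisj hosc hc0 hbd) _
            _ = ENNReal.ofReal ((M₁' * M₂') * (K * (Ca * (L N) ^ (-(d:ℝ))) * Iψ)) :=
                (ENNReal.ofReal_mul (mul_nonneg hM₁0 hM₂0)).symm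
  -- the trivial bound on |SN|
  have hSbd2 : |SN| ≤ (M₁' * M₂') * (2 * M₃' * (2 * M₄')) := by
    rw [← Real.norm_eq_abs]
    calc ‖SN‖ ≤ ((M₁' * M₂') * (2 * M₃' * (2 * M₄'))) * (μ Set.univ).toReal :=
          norm_integral_le_of_norm_le_const (Filter.Eventually.of_forall fun x => by
            rw [Real.norm_eq_abs]; exact hSbdd x)
      _ = (M₁' * M₂') * (2 * M₃' * (2 * M₄')) := by simp
  -- the trivial bound on |CN - IA₁ * IA₂|
  have hCbd2 : |CN - IA₁ * IA₂| ≤ 2 * (M₁' * M₂') := by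
    have h1 : |CN| ≤ M₁' * M₂' := by
      rw [← Real.norm_eq_abs]
      calc ‖CN‖ ≤ (M₁' * M₂') * (μ Set.univ).toReal :=
            norm_integral_le_of_norm_le_const (Filter.Eventually.of_forall fun x => by
              rw [Real.norm_eq_abs]; exact hCbdd x)
        _ = M₁' * M₂' := by simp
    have h2 : |IA₁| ≤ M₁' := by
      rw [← Real.norm_eq_abs]
      calc ‖IA₁‖ ≤ M₁' * (μ Set.univ).toReal :=
            norm_integral_le_of_norm_le_const (Filter.Eventually.of_forall fun x => by
              rw [Real.norm_eq_abs]; exact hM₁b x)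
        _ = M₁' := by simp
    have h3 : |IA₂| ≤ M₂' := by
      rw [← Real.norm_eq_abs]
      calc ‖IA₂‖ ≤ M₂' * (μ Set.univ).toReal :=
            norm_integral_le_of_norm_le_const (Filter.Eventually.of_forall fun x => by
              rw [Real.norm_eq_abs]; exact hM₂b x)
        _ = M₂' := by simp
    have h4 : |IA₁ * IA₂| ≤ M₁' * M₂' := by
      rw [abs_mul]; exact mul_le_mul h2 h3 (abs_nonneg _) hM₁0
    have h5 : |CN - IA₁ * IA₂| ≤ |CN| + |IA₁ * IA₂| := by
      rw [sub_eq_add_neg]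
      exact (abs_add_le _ _).trans_eq (by rw [abs_neg])
    linarith
  rcases le_or_gt 1 (L N) with hL1 | hL1
  · -- case L N ≥ 1
    have hPα : (L N) ^ (-α) ≤ (L N) ^ (-(min (d:ℝ) α)) :=
      Real.rpow_le_rpow_of_exponent_le hL1 (neg_le_neg (min_le_right _ _))
    have hPd : (L N) ^ (-(d:ℝ)) ≤ (L N) ^ (-(min (d:ℝ) α)) :=
      Real.rpow_le_rpow_of_exponent_le hL1 (neg_le_neg (min_le_left _ _))
    have hP0 : 0 ≤ (L N) ^ (-(min (d:ℝ) α)) := Real.rpow_nonneg (hL N).le _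
    calc |m₁ * m₂ * (CN - IA₁ * IA₂) + SN|
        ≤ |m₁| * |m₂| * |CN - IA₁ * IA₂| + |SN| := habs
      _ ≤ (M₃' * M₄') * (Cf * (L N) ^ (-α))
          + (M₁' * M₂') * (K * (Ca * (L N) ^ (-(d:ℝ))) * Iψ) := by
          apply add_le_add _ hSbd1
          exact mul_le_mul (mul_le_mul hm₁b hm₂b (abs_nonneg _) hM₃0) hmix
            (abs_nonneg _) (mul_nonneg hM₃0 hM₄0)
      _ = (M₃' * M₄' * Cf) * (L N) ^ (-α)
          + (M₁' * M₂' * (K * Ca * Iψ)) * (L N) ^ (-(d:ℝ)) := by ring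
      _ ≤ (M₃' * M₄' * Cf) * (L N) ^ (-(min (d:ℝ) α))
          + (M₁' * M₂' * (K * Ca * Iψ)) * (L N) ^ (-(min (d:ℝ) α)) := by
          apply add_le_add
          · exact mul_le_mul_of_nonneg_left hPα
              (mul_nonneg (mul_nonneg hM₃0 hM₄0) hCf0)
          · exact mul_le_mul_of_nonneg_left hPd
              (mul_nonneg (mul_nonneg hM₁0 hM₂0)
                (mul_nonneg (mul_nonneg hK.le hCa.le) hIψ0))
      _ = C1 * (L N) ^ (-(min (d:ℝ) α)) := by rw [hC1def]; ring
      _ ≤ max C1 C2 * (L N) ^ (-(min (d:ℝ) α)) :=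
          mul_le_mul_of_nonneg_right (le_max_left _ _) hP0
  · -- case L N < 1
    have hP1 : 1 ≤ (L N) ^ (-(min (d:ℝ) α)) :=
      Real.one_le_rpow_of_pos_of_le_one_of_nonpos (hL N) hL1.le
        (neg_nonpos.2 (le_min (Nat.cast_nonneg d) hα.le))
    calc |m₁ * m₂ * (CN - IA₁ * IA₂) + SN|
        ≤ |m₁| * |m₂| * |CN - IA₁ * IA₂| + |SN| := habs
      _ ≤ (M₃' * M₄') * (2 * (M₁' * M₂')) + (M₁' * M₂') * (2 * M₃' * (2 * M₄')) := by
          apply add_le_add _ hSbd2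
          exact mul_le_mul (mul_le_mul hm₁b hm₂b (abs_nonneg _) hM₃0) hCbd2
            (abs_nonneg _) (mul_nonneg hM₃0 hM₄0)
      _ = C2 := hC2def.symm
      _ ≤ max C1 C2 := le_max_right _ _
      _ ≤ max C1 C2 * (L N) ^ (-(min (d:ℝ) α)) := le_mul_of_one_le_right hC'0 hP1


end
end

section
/- Let s ≥ 2. Assume μ(τ) ≠ 0 and that τ satisfies exponential large deviation bounds: for each ε > 0 there exist C, δ > 0 with μ(‖τ_N/N − μ(τ)‖ ≥ ε) ≤ C e^{−δN} for all N ≥ 1. Let A₁, …, A_s : X → ℝ be bounded measurable with |μ(∏_{j=1}^s A_j ∘ f^{N_j}) − ∏_{j=1}^s μ(A_j)| ≤ C_f e^{−c_f min_{i≠j}|N_i−N_j|} for all integers N₁ ≤ … ≤ N_s, and let B₁, …, B_s : Y → ℝ be bounded measurable with |ν(∏_{j=1}^s B_j ∘ G_{t_j}) − ∏_{j=1}^s ν(B_j)| ≤ C_G e^{−κ min_{i≠j}‖t_i−t_j‖} for all t₁, …, t_s ∈ ℝ^d. Then, with Φ_j(x, y) = A_j(x)B_j(y), there exist C', c' > 0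 such that for all integers N₁ ≤ … ≤ N_s, |∫ ∏_{j=1}^s Φ_j ∘ F^{N_j} dζ − ∏_{j=1}^s ∫ Φ_j dζ| ≤ C' e^{−c' min_{i≠j}|N_i − N_j|}. -/
open MeasureTheory Filter Topology

noncomputable section

lemma birkhoff_succ' {X : Type*} {d : ℕ} (f : X → X) (τ : X → EuclideanSpace ℝ (Fin d))
    (N : ℕ) (x : X) : birkhoff f τ (N+1) x = τ x + birkhoff f τ N (f x) := by
  simp only [birkhoff, Finset.sum_range_succ']
  rw [add_comm]
  simp [Function.iterate_succ_apply]

lemma birkhoff_succ {X : Type*} {d : ℕ} (f : X → X) (τ : X → EuclideanSpace ℝ (Fin d))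
    (N : ℕ) (x : X) : birkhoff f τ (N+1) x = birkhoff f τ N x + τ (f^[N] x) :=
  Finset.sum_range_succ _ _

lemma birkhoff_add {X : Type*} {d : ℕ} (f : X → X) (τ : X → EuclideanSpace ℝ (Fin d))
    (a b : ℕ) (x : X) :
    birkhoff f τ (a + b) x = birkhoff f τ a x + birkhoff f τ b (f^[a] x) := by
  induction b with
  | zero => simp [birkhoff]
  | succ b ih =>
    have h : a + (b + 1) = (a + b) + 1 := by ring
    rw [h, birkhoff_succ, ih, birkhoff_succ, add_assoc]
    congr 2
    rw [← Function.iterate_add_apply, Nat.add_comm b a]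

lemma skew_iterate {X Y : Type*} {d : ℕ} (f : X → X) (G : EuclideanSpace ℝ (Fin d) → Y → Y)
    (τ : X → EuclideanSpace ℝ (Fin d)) (hG0 : G 0 = id) (hGadd : ∀ t s, G (t + s) = G t ∘ G s)
    (N : ℕ) (x : X) (y : Y) :
    (skew f G τ)^[N] (x, y) = (f^[N] x, G (birkhoff f τ N x) y) := by
  induction N generalizing x y with
  | zero => simp [birkhoff, hG0]
  | succ N ih =>
    rw [Function.iterate_succ_apply, skew]
    show (skew f G τ)^[N] (f x, G (τ x) y) = _
    rw [ih]
    refine Prod.ext (Function.iterate_succ_apply f N x).symm ?_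
    show (G (birkhoff f τ N (f x)) ∘ G (τ x)) y = _
    rw [← hGadd, birkhoff_succ', add_comm]

lemma birkhoff_measurable {X : Type*} [MeasurableSpace X] {d : ℕ} {f : X → X}
    (hf : Measurable f) {τ : X → EuclideanSpace ℝ (Fin d)} (hτ : Measurable τ) (N : ℕ) :
    Measurable (birkhoff f τ N) := by
  apply Finset.measurable_sum
  intro n _
  exact hτ.comp (hf.iterate n)

lemma abs_integral_le_const {α : Type*} [MeasurableSpace α] (μ : Measure α)
    [IsProbabilityMeasure μ] {h : α → ℝ} {M : ℝ} (hb : ∀ x, |h x| ≤ M) :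
    |∫ x, h x ∂μ| ≤ M := by
  rw [← Real.norm_eq_abs]
  calc ‖∫ x, h x ∂μ‖ ≤ M * (μ Set.univ).toReal :=
        norm_integral_le_of_norm_le_const
          (Filter.Eventually.of_forall fun x => by rw [Real.norm_eq_abs]; exact hb x)
    _ = M := by simp

set_option maxHeartbeats 1000000 in
/-- Theorem 4.12 of the paper: nonzero drift, exponential large deviation bounds for `τ`,
and exponential mixing of order `s` for `f` and `G` imply exponential mixing of order `s`
for the skew product `F` (the rate being exponential in `min_{i≠j}|N_i - N_j|`). -/
theorem stmt_9
    {X Y : Type*} [MeasurableSpace X] [MeasurableSpace Y]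
    (μ : Measure X) (ν : Measure Y)
    [IsProbabilityMeasure μ] [IsProbabilityMeasure ν]
    {d : ℕ}
    (f : X → X) (hf : MeasurePreserving f μ μ)
    (G : EuclideanSpace ℝ (Fin d) → Y → Y)
    (hGmeas : Measurable fun q : EuclideanSpace ℝ (Fin d) × Y => G q.1 q.2)
    (hG0 : G 0 = id)
    (hGadd : ∀ t s, G (t + s) = G t ∘ G s)
    (hGpres : ∀ t, MeasurePreserving (G t) ν ν)
    (τ : X → EuclideanSpace ℝ (Fin d)) (hτmeas : Measurable τ)
    (hτbdd : ∃ M, ∀ x, ‖τ x‖ ≤ M)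
    (s : ℕ) (hs : 2 ≤ s)
    (hdrift : (∫ x, τ x ∂μ) ≠ 0)
    -- exponential large deviation bounds for τ
    (hLD : ∀ ε : ℝ, 0 < ε → ∃ C : ℝ, 0 < C ∧ ∃ δ : ℝ, 0 < δ ∧ ∀ N : ℕ, 1 ≤ N →
      (μ {x | ε ≤ ‖(N : ℝ)⁻¹ • birkhoff f τ N x - ∫ x, τ x ∂μ‖}).toReal
        ≤ C * Real.exp (-δ * N))
    (A : Fin s → X → ℝ) (hAm : ∀ j, Measurable (A j))
    (hAb : ∀ j, ∃ M, ∀ x, |A j x| ≤ M)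
    (B : Fin s → Y → ℝ) (hBm : ∀ j, Measurable (B j))
    (hBb : ∀ j, ∃ M, ∀ y, |B j y| ≤ M)
    (Cf cf CG κ : ℝ) (hCf : 0 < Cf) (hcf : 0 < cf) (hCG : 0 < CG) (hκ : 0 < κ)
    -- exponential mixing of order s of f
    (hfmix : ∀ N : Fin s → ℕ, (∀ i j : Fin s, i ≤ j → N i ≤ N j) →
      ∀ m : ℕ, (∀ i j : Fin s, i ≠ j → (m : ℤ) ≤ |(N i : ℤ) - (N j : ℤ)|) →
      |(∫ x, ∏ j, A j (f^[N j] x) ∂μ) - ∏ j, ∫ x, A j x ∂μ|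
        ≤ Cf * Real.exp (-cf * m))
    -- exponential mixing of order s of G
    (hGmix : ∀ t : Fin s → EuclideanSpace ℝ (Fin d), ∀ m : ℝ, 0 ≤ m →
      (∀ i j : Fin s, i ≠ j → m ≤ ‖t i - t j‖) →
      |(∫ y, ∏ j, B j (G (t j) y) ∂ν) - ∏ j, ∫ y, B j y ∂ν|
        ≤ CG * Real.exp (-κ * m)) :
    ∃ C' : ℝ, 0 < C' ∧ ∃ c' : ℝ, 0 < c' ∧
      ∀ N : Fin s → ℕ, (∀ i j : Fin s, i ≤ j → N i ≤ N j) →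
      ∀ m : ℕ, (∀ i j : Fin s, i ≠ j → (m : ℤ) ≤ |(N i : ℤ) - (N j : ℤ)|) →
        |(∫ q, ∏ j, (A j ((skew f G τ)^[N j] q).1 * B j ((skew f G τ)^[N j] q).2)
            ∂(μ.prod ν))
          - ∏ j, ∫ q, A j q.1 * B j q.2 ∂(μ.prod ν)|
          ≤ C' * Real.exp (-c' * m) := by
  classical
  -- bounds for A and B
  have hAb' : ∀ j, ∃ M, 0 ≤ M ∧ ∀ x, |A j x| ≤ M := by
    intro j; obtain ⟨M, hM⟩ := hAb j
    exact ⟨max M 0, le_max_right _ _, fun x => (hM x).trans (le_max_left _ _)⟩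
  have hBb' : ∀ j, ∃ M, 0 ≤ M ∧ ∀ y, |B j y| ≤ M := by
    intro j; obtain ⟨M, hM⟩ := hBb j
    exact ⟨max M 0, le_max_right _ _, fun y => (hM y).trans (le_max_left _ _)⟩
  choose a ha0 haA using hAb'
  choose b hb0 hbB using hBb'
  set MA : ℝ := ∏ j, a j with hMA
  set MB : ℝ := ∏ j, b j with hMB
  have hMA0 : 0 ≤ MA := Finset.prod_nonneg fun j _ => ha0 j
  have hMB0 : 0 ≤ MB := Finset.prod_nonneg fun j _ => hb0 j
  -- drift
  set v : EuclideanSpace ℝ (Fin d) := ∫ x, τ x ∂μ with hv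
  have haD : 0 < ‖v‖ := norm_pos_iff.mpr hdrift
  set aD : ℝ := ‖v‖ with haDdef
  obtain ⟨C, hC, δ, hδ, hLDb⟩ := hLD (aD / 2) (by positivity)
  -- constants
  refine ⟨MA * CG + 2 * MA * MB * ((s : ℝ) * s) * C + MB * Cf + 2 * MA * MB + 1, by positivity,
    min (min (κ * (aD / 2)) δ) cf, by positivity, ?_⟩
  set c' : ℝ := min (min (κ * (aD / 2)) δ) cf with hc'def
  have hc'pos : 0 < c' := by positivity
  set C' : ℝ := MA * CG + 2 * MA * MB * ((s : ℝ) * s) * C + MB * Cf + 2 * MA * MB + 1 with hC'def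
  intro N hN m hm
  -- pointwise bounds on products
  have hgbd : ∀ x, |∏ j, A j (f^[N j] x)| ≤ MA := by
    intro x
    rw [Finset.abs_prod]
    exact Finset.prod_le_prod (fun j _ => abs_nonneg _) (fun j _ => haA j _)
  have hBprod : ∀ (w : Fin s → Y), |∏ j, B j (w j)| ≤ MB := by
    intro w
    rw [Finset.abs_prod]
    exact Finset.prod_le_prod (fun j _ => abs_nonneg _) (fun j _ => hbB j _)
  -- basic objects
  set g : X → ℝ := fun x => ∏ j, A j (f^[N j] x) with hg
  set t : X → Fin s → EuclideanSpace ℝ (Fin d) := fun x j => birkhoff f τ (N j) x with ht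
  set φ : X → ℝ := fun x => ∫ y, ∏ j, B j (G (t x j) y) ∂ν with hφ
  set PA : ℝ := ∏ j, ∫ x, A j x ∂μ with hPA
  set PB : ℝ := ∏ j, ∫ y, B j y ∂ν with hPB
  have hPBbd : |PB| ≤ MB := by
    rw [hPB, Finset.abs_prod]
    exact Finset.prod_le_prod (fun j _ => abs_nonneg _)
      (fun j _ => abs_integral_le_const ν (hbB j))
  have hφbd : ∀ x, |φ x| ≤ MB := fun x =>
    abs_integral_le_const ν (fun y => hBprod _)
  -- measurability facts
  have hgm : Measurable g := by
    apply Finset.measurable_prod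
    intro j _
    exact (hAm j).comp (hf.measurable.iterate (N j))
  have htm : ∀ j, Measurable fun x => t x j := fun j =>
    birkhoff_measurable hf.measurable hτmeas (N j)
  have hHm : Measurable fun q : X × Y => ∏ j, B j (G (t q.1 j) q.2) := by
    apply Finset.measurable_prod
    intro j _
    exact (hBm j).comp (hGmeas.comp (((htm j).comp measurable_fst).prodMk measurable_snd))
  have hφm : Measurable φ := by
    have := (hHm.stronglyMeasurable).integral_prod_right' (ν := ν)
    exact this.measurable
  -- rewrite the product integral
  have hiter : ∀ q : X × Y, ∀ n : ℕ,
      (skew f G τ)^[n] q = (f^[n] q.1, G (birkhoff f τ n q.1) q.2) := by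
    intro q n; cases q; exact skew_iterate f G τ hG0 hGadd n _ _
  have hIntH : Integrable (fun q : X × Y => g q.1 * ∏ j, B j (G (t q.1 j) q.2)) (μ.prod ν) := by
    refine Integrable.mono' (integrable_const (MA * MB))
      (((hgm.comp measurable_fst).mul hHm).aestronglyMeasurable)
      (Filter.Eventually.of_forall fun q => ?_)
    rw [Real.norm_eq_abs, abs_mul]
    exact mul_le_mul (hgbd _) (hBprod _) (abs_nonneg _) hMA0
  have key : (∫ q, ∏ j, (A j ((skew f G τ)^[N j] q).1 * B j ((skew f G τ)^[N j] q).2)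
      ∂(μ.prod ν)) = ∫ x, g x * φ x ∂μ := by
    have step1 : (∫ q, ∏ j, (A j ((skew f G τ)^[N j] q).1 * B j ((skew f G τ)^[N j] q).2)
        ∂(μ.prod ν)) = ∫ q : X × Y, g q.1 * ∏ j, B j (G (t q.1 j) q.2) ∂(μ.prod ν) := by
      refine integral_congr_ae (Filter.Eventually.of_forall fun q => ?_)
      simp only [hiter]
      rw [hg, ht, ← Finset.prod_mul_distrib]
    rw [step1, integral_prod _ hIntH]
    refine integral_congr_ae (Filter.Eventually.of_forall fun x => ?_)
    show ∫ y, g x * ∏ j, B j (G (t x j) y) ∂ν = g x * φ x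
    rw [integral_const_mul, hφ]
  have keyR : (∏ j, ∫ q, A j q.1 * B j q.2 ∂(μ.prod ν)) = PA * PB := by
    rw [hPA, hPB, ← Finset.prod_mul_distrib]
    exact Finset.prod_congr rfl fun j _ => integral_prod_mul (A j) (B j)
  rw [key, keyR]
  -- trivial case m = 0
  rcases Nat.eq_zero_or_pos m with hm0 | hm1
  · subst hm0
    have h1 : |∫ x, g x * φ x ∂μ| ≤ MA * MB := by
      refine abs_integral_le_const μ (fun x => ?_)
      calc |g x * φ x| = |g x| * |φ x| := abs_mul _ _
        _ ≤ MA * MB := mul_le_mul (hgbd x) (hφbd x) (abs_nonneg _) hMA0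
    have h2 : |PA * PB| ≤ MA * MB := by
      rw [abs_mul]
      have hPAbd : |PA| ≤ MA := by
        rw [hPA, Finset.abs_prod]
        exact Finset.prod_le_prod (fun j _ => abs_nonneg _)
          (fun j _ => abs_integral_le_const μ (haA j))
      exact mul_le_mul hPAbd hPBbd (abs_nonneg _) hMA0
    calc |(∫ x, g x * φ x ∂μ) - PA * PB| ≤ |∫ x, g x * φ x ∂μ| + |PA * PB| := abs_sub _ _
      _ ≤ MA * MB + MA * MB := add_le_add h1 h2
      _ ≤ C' * Real.exp (-c' * (0:ℕ)) := by
          simp only [Nat.cast_zero, mul_zero, neg_zero, Real.exp_zero, mul_one]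
          rw [hC'def]
          have h3 : 0 ≤ MA * CG := mul_nonneg hMA0 hCG.le
          have h4 : 0 ≤ 2 * MA * MB * ((s : ℝ) * s) * C := by positivity
          have h5 : 0 ≤ MB * Cf := mul_nonneg hMB0 hCf.le
          linarith
  -- main case m ≥ 1
  · -- bad sets
    set Bad : ℕ → Set X := fun K => {x | aD / 2 ≤ ‖(K : ℝ)⁻¹ • birkhoff f τ K x - v‖} with hBad
    have hBadMeas : ∀ K, MeasurableSet (Bad K) := by
      intro K
      apply measurableSet_le measurable_const
      exact (((birkhoff_measurable hf.measurable hτmeas K).const_smul ((K : ℝ)⁻¹)).sub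
        (measurable_const (a := v))).norm
    set S : Fin s × Fin s → Set X := fun p =>
      if N p.1 < N p.2 then f^[N p.1] ⁻¹' Bad (N p.2 - N p.1) else ∅ with hS
    have hSMeas : ∀ p, MeasurableSet (S p) := by
      intro p
      rw [hS]
      show MeasurableSet (if N p.1 < N p.2 then f^[N p.1] ⁻¹' Bad (N p.2 - N p.1) else ∅)
      split
      · exact (hBadMeas _).preimage (hf.measurable.iterate _)
      · exact MeasurableSet.empty
    set E : Set X := ⋃ p ∈ ((Finset.univ : Finset (Fin s)).offDiag), S p with hE
    have hEMeas : MeasurableSet E := by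
      apply Finset.measurableSet_biUnion
      intro p _
      exact hSMeas p
    -- measure of the bad set
    have hEbd : (μ E).toReal ≤ ((s : ℝ) * s) * (C * Real.exp (-δ * m)) := by
      have hper : ∀ p ∈ ((Finset.univ : Finset (Fin s)).offDiag),
          μ (S p) ≤ ENNReal.ofReal (C * Real.exp (-δ * m)) := by
        intro p hp
        rw [hS]
        show μ (if N p.1 < N p.2 then f^[N p.1] ⁻¹' Bad (N p.2 - N p.1) else ∅) ≤ _
        split
        · rename_i hlt
          set K := N p.2 - N p.1 with hK
          have hK1 : 1 ≤ K := by omega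
          have hKm : m ≤ K := by
            have hpd := (Finset.mem_offDiag.mp hp).2.2
            have h := hm p.1 p.2 hpd
            rw [abs_sub_comm, abs_of_nonneg (by
              have : (N p.1 : ℤ) ≤ (N p.2 : ℤ) := by exact_mod_cast hlt.le
              omega)] at h
            omega
          rw [(hf.iterate (N p.1)).measure_preimage (hBadMeas K).nullMeasurableSet]
          have hfin : μ (Bad K) ≠ ⊤ := measure_ne_top μ _
          rw [← ENNReal.ofReal_toReal hfin]
          apply ENNReal.ofReal_le_ofReal
          have h1 : (μ (Bad K)).toReal ≤ C * Real.exp (-δ * K) := hLDb K hK1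
          refine h1.trans (mul_le_mul_of_nonneg_left (Real.exp_le_exp.mpr ?_) hC.le)
          have : (m : ℝ) ≤ (K : ℝ) := by exact_mod_cast hKm
          nlinarith
        · simp
      have h1 : μ E ≤ ((Finset.univ : Finset (Fin s)).offDiag.card : ENNReal)
          * ENNReal.ofReal (C * Real.exp (-δ * m)) := by
        rw [hE]
        refine (measure_biUnion_finset_le _ _).trans ?_
        simpa [nsmul_eq_mul] using Finset.sum_le_card_nsmul _ _ _ hper
      have h2 : (μ E).toReal ≤ (((Finset.univ : Finset (Fin s)).offDiag.card : ENNReal)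
          * ENNReal.ofReal (C * Real.exp (-δ * m))).toReal := by
        refine ENNReal.toReal_mono ?_ h1
        exact ENNReal.mul_ne_top (ENNReal.natCast_ne_top _) ENNReal.ofReal_ne_top
      refine h2.trans ?_
      rw [ENNReal.toReal_mul, ENNReal.toReal_ofReal (by positivity)]
      refine mul_le_mul_of_nonneg_right ?_ (by positivity)
      rw [show (((Finset.univ : Finset (Fin s)).offDiag.card : ENNReal)).toReal
        = ((Finset.univ : Finset (Fin s)).offDiag.card : ℝ) from rfl]
      have hcard : ((Finset.univ : Finset (Fin s)).offDiag.card : ℝ) ≤ (s * s : ℕ) := by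
        exact_mod_cast (Finset.card_le_univ _).trans (le_of_eq (by simp [Fintype.card_prod]))
      calc ((Finset.univ : Finset (Fin s)).offDiag.card : ℝ) ≤ (s * s : ℕ) := hcard
        _ = (s : ℝ) * s := by push_cast; ring
    -- separation on the good set
    have hgood : ∀ x, x ∉ E → ∀ i j : Fin s, i ≠ j → (m : ℝ) * (aD / 2) ≤ ‖t x i - t x j‖ := by
      intro x hx
      have main : ∀ i j : Fin s, i ≠ j → N i < N j → (m : ℝ) * (aD / 2) ≤ ‖t x j - t x i‖ := by
        intro i j hij hlt
        set K := N j - N i with hK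
        have hK1 : 1 ≤ K := by omega
        have hKm : m ≤ K := by
          have h := hm i j hij
          rw [abs_sub_comm, abs_of_nonneg (by
            have : (N i : ℤ) ≤ (N j : ℤ) := by exact_mod_cast hlt.le
            omega)] at h
          omega
        have hxS : x ∉ S (i, j) := by
          intro hxS
          exact hx (Set.mem_biUnion (Finset.mem_coe.mpr
            (Finset.mem_offDiag.mpr ⟨Finset.mem_univ _, Finset.mem_univ _, hij⟩)) hxS)
        have hSij : S (i, j) = f^[N i] ⁻¹' Bad K := by rw [hS]; exact if_pos hlt
        rw [hSij] at hxS
        have hnb : ¬ (aD / 2 ≤ ‖(K : ℝ)⁻¹ • birkhoff f τ K (f^[N i] x) - v‖) := hxS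
        push_neg at hnb
        set w := birkhoff f τ K (f^[N i] x) with hw
        have htw : t x j - t x i = w := by
          show birkhoff f τ (N j) x - birkhoff f τ (N i) x = w
          have hNj : N j = N i + K := by omega
          rw [hNj, birkhoff_add]
          abel
        rw [htw]
        have hKpos : (0 : ℝ) < K := by exact_mod_cast hK1
        have hnorm : ‖(K : ℝ)⁻¹ • w‖ = (K : ℝ)⁻¹ * ‖w‖ := by
          rw [norm_smul, Real.norm_eq_abs, abs_of_nonneg (by positivity)]
        have htri : aD ≤ ‖v - (K : ℝ)⁻¹ • w‖ + ‖(K : ℝ)⁻¹ • w‖ := by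
          simpa using norm_add_le (v - (K : ℝ)⁻¹ • w) ((K : ℝ)⁻¹ • w)
        have hrev : ‖v - (K : ℝ)⁻¹ • w‖ = ‖(K : ℝ)⁻¹ • w - v‖ := norm_sub_rev _ _
        have h5 : aD / 2 ≤ (K : ℝ)⁻¹ * ‖w‖ := by
          rw [← hnorm]; rw [hrev] at htri; linarith
        have hmK : (m : ℝ) ≤ (K : ℝ) := by exact_mod_cast hKm
        calc (m : ℝ) * (aD / 2) ≤ (K : ℝ) * (aD / 2) :=
              mul_le_mul_of_nonneg_right hmK (by positivity)
          _ ≤ (K : ℝ) * ((K : ℝ)⁻¹ * ‖w‖) := mul_le_mul_of_nonneg_left h5 hKpos.le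
          _ = ‖w‖ := by field_simp
      intro i j hij
      have hNne : N i ≠ N j := by
        intro hEq
        have h := hm i j hij
        rw [hEq] at h
        simp at h
        omega
      rcases lt_or_gt_of_ne hNne with h | h
      · rw [norm_sub_rev]; exact main i j hij h
      · exact main j i (Ne.symm hij) h
    -- pointwise bound on φ - PB
    have hφPB : ∀ x, |φ x - PB| ≤ CG * Real.exp (-κ * ((m : ℝ) * (aD / 2)))
        + (2 * MB) * E.indicator (fun _ => (1:ℝ)) x := by
      intro x
      by_cases hx : x ∈ E
      · rw [Set.indicator_of_mem hx]
        have : |φ x - PB| ≤ 2 * MB := by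
          calc |φ x - PB| ≤ |φ x| + |PB| := abs_sub _ _
            _ ≤ MB + MB := add_le_add (hφbd x) hPBbd
            _ = 2 * MB := by ring
        nlinarith [Real.exp_pos (-κ * ((m : ℝ) * (aD / 2))), hCG]
      · rw [Set.indicator_of_notMem hx]
        have := hGmix (t x) ((m : ℝ) * (aD / 2)) (by positivity) (hgood x hx)
        simpa using this
    -- the main estimate
    have hIntg : Integrable g μ := by
      refine Integrable.mono' (integrable_const MA) hgm.aestronglyMeasurable
        (Filter.Eventually.of_forall fun x => ?_)
      rw [Real.norm_eq_abs]; exact hgbd x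
    have hIntgφ : Integrable (fun x => g x * φ x) μ := by
      refine Integrable.mono' (integrable_const (MA * MB))
        ((hgm.mul hφm).aestronglyMeasurable)
        (Filter.Eventually.of_forall fun x => ?_)
      rw [Real.norm_eq_abs, abs_mul]
      exact mul_le_mul (hgbd x) (hφbd x) (abs_nonneg _) hMA0
    have hIntgd : Integrable (fun x => g x * (φ x - PB)) μ := by
      refine Integrable.mono' (integrable_const (MA * (MB + MB)))
        ((hgm.mul (hφm.sub measurable_const)).aestronglyMeasurable)
        (Filter.Eventually.of_forall fun x => ?_)
      rw [Real.norm_eq_abs, abs_mul]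
      refine mul_le_mul (hgbd x) ?_ (abs_nonneg _) hMA0
      calc |φ x - PB| ≤ |φ x| + |PB| := abs_sub _ _
        _ ≤ MB + MB := add_le_add (hφbd x) hPBbd
    have hsplit : (∫ x, g x * φ x ∂μ) - PA * PB
        = (∫ x, g x * (φ x - PB) ∂μ) + ((∫ x, g x ∂μ) - PA) * PB := by
      have h1 : ∫ x, g x * (φ x - PB) ∂μ
          = (∫ x, g x * φ x ∂μ) - PB * ∫ x, g x ∂μ := by
        have heq : (fun x => g x * (φ x - PB)) = fun x => g x * φ x - PB * g x := by
          funext x; ring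
        rw [heq, integral_sub hIntgφ (hIntg.const_mul PB), integral_const_mul]
      rw [h1]; ring
    have hint1 : |∫ x, g x * (φ x - PB) ∂μ|
        ≤ MA * (CG * Real.exp (-κ * ((m : ℝ) * (aD / 2)))) + MA * (2 * MB) * (μ E).toReal := by
      set e1 : ℝ := CG * Real.exp (-κ * ((m : ℝ) * (aD / 2))) with he1
      have he1pos : 0 ≤ e1 := by positivity
      set R : X → ℝ := fun x => MA * e1 + (MA * (2 * MB)) * E.indicator (fun _ => (1:ℝ)) x
        with hR
      have hIntR : Integrable R μ := by
        apply Integrable.add (integrable_const _)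
        exact (((integrable_const (1:ℝ)).indicator hEMeas).const_mul _)
      have hp : ∀ x, |g x * (φ x - PB)| ≤ R x := by
        intro x
        rw [abs_mul, hR]
        calc |g x| * |φ x - PB|
            ≤ MA * (e1 + (2 * MB) * E.indicator (fun _ => (1:ℝ)) x) := by
              refine mul_le_mul (hgbd x) (hφPB x) (abs_nonneg _) hMA0
          _ = MA * e1 + (MA * (2 * MB)) * E.indicator (fun _ => (1:ℝ)) x := by ring
      have habs : |∫ x, g x * (φ x - PB) ∂μ| ≤ ∫ x, |g x * (φ x - PB)| ∂μ := by
        rw [← Real.norm_eq_abs]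
        refine (norm_integral_le_integral_norm _).trans (le_of_eq ?_)
        exact integral_congr_ae (Filter.Eventually.of_forall fun x => by
          simp [Real.norm_eq_abs, abs_mul])
      refine habs.trans ?_
      have hmono : ∫ x, |g x * (φ x - PB)| ∂μ ≤ ∫ x, R x ∂μ :=
        integral_mono hIntgd.abs hIntR hp
      refine hmono.trans ?_
      rw [hR]
      rw [integral_add (integrable_const _)
        (((integrable_const (1:ℝ)).indicator hEMeas).const_mul _)]
      rw [integral_const, integral_const_mul, integral_indicator_const (1:ℝ) hEMeas]
      simp [smul_eq_mul, Measure.real]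
    have hint2 : |(∫ x, g x ∂μ) - PA| ≤ Cf * Real.exp (-cf * m) := hfmix N hN m hm
    -- combine
    have hexp1 : Real.exp (-κ * ((m : ℝ) * (aD / 2))) ≤ Real.exp (-c' * m) := by
      apply Real.exp_le_exp.mpr
      have h1 : c' ≤ κ * (aD / 2) := (min_le_left _ _).trans (min_le_left _ _)
      nlinarith [Nat.cast_nonneg (α := ℝ) m]
    have hexp2 : Real.exp (-δ * m) ≤ Real.exp (-c' * m) := by
      apply Real.exp_le_exp.mpr
      have h1 : c' ≤ δ := (min_le_left _ _).trans (min_le_right _ _)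
      nlinarith [Nat.cast_nonneg (α := ℝ) m]
    have hexp3 : Real.exp (-cf * m) ≤ Real.exp (-c' * m) := by
      apply Real.exp_le_exp.mpr
      have h1 : c' ≤ cf := min_le_right _ _
      nlinarith [Nat.cast_nonneg (α := ℝ) m]
    have hEbd' : (μ E).toReal ≤ ((s : ℝ) * s) * (C * Real.exp (-c' * m)) := by
      refine hEbd.trans ?_
      exact mul_le_mul_of_nonneg_left (mul_le_mul_of_nonneg_left hexp2 hC.le) (by positivity)
    have hμE0 : 0 ≤ (μ E).toReal := ENNReal.toReal_nonneg
    calc |(∫ x, g x * φ x ∂μ) - PA * PB|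
        = |(∫ x, g x * (φ x - PB) ∂μ) + ((∫ x, g x ∂μ) - PA) * PB| := by rw [hsplit]
      _ ≤ |∫ x, g x * (φ x - PB) ∂μ| + |((∫ x, g x ∂μ) - PA) * PB| := abs_add_le _ _
      _ ≤ (MA * (CG * Real.exp (-κ * ((m : ℝ) * (aD / 2)))) + MA * (2 * MB) * (μ E).toReal)
          + (Cf * Real.exp (-cf * m)) * MB := by
          refine add_le_add hint1 ?_
          rw [abs_mul]
          exact mul_le_mul hint2 hPBbd (abs_nonneg _) (by positivity)
      _ ≤ (MA * (CG * Real.exp (-c' * m)) + MA * (2 * MB) * (((s : ℝ) * s) * (C * Real.exp (-c' * m))))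
          + (Cf * Real.exp (-c' * m)) * MB := by
          refine add_le_add (add_le_add ?_ ?_) ?_
          · exact mul_le_mul_of_nonneg_left (mul_le_mul_of_nonneg_left hexp1 hCG.le) hMA0
          · exact mul_le_mul_of_nonneg_left hEbd' (by positivity)
          · exact mul_le_mul_of_nonneg_right (mul_le_mul_of_nonneg_left hexp3 hCf.le) hMB0
      _ = (MA * CG + MA * (2 * MB) * ((s : ℝ) * s) * C + Cf * MB) * Real.exp (-c' * m) := by
          ring
      _ ≤ C' * Real.exp (-c' * m) := by
          refine mul_le_mul_of_nonneg_right ?_ (Real.exp_pos _).le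
          rw [hC'def]
          have h6 : 0 ≤ MA * MB := mul_nonneg hMA0 hMB0
          nlinarith


end
end
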